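/- arXiv:1105.2132 — 5 statements merged into one kernel-verified Lean document; each statement's English description precedes it below -/
import Mathlib

section
/- A nonempty closed subset Ω of a normed space X is convex if and only if the distance function x ↦ d(x, Ω) = inf{‖x − ω‖ : ω ∈ Ω} is a convex function on X. -/
/-- A nonempty closed subset of a normed space is convex if and only if
its distance function is convex. -/
theorem convex_iff_convexOn_infDist
    {X : Type*} [NormedAddCommGroup X] [NormedSpace ℝ X]
    (Ω : Set X) (hne : Ω.Nonempty) (hcl : IsClosed Ω) :
    Convex ℝ Ω ↔ ConvexOn ℝ Set.univ (fun x => Metric.infDist x Ω) := by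
  constructor
  · intro hΩ
    refine ⟨convex_univ, fun x _ y _ a b ha hb hab => ?_⟩
    refine le_of_forall_pos_le_add fun ε hε => ?_
    obtain ⟨ω₁, hω₁, hd₁⟩ := (Metric.infDist_lt_iff hne).1
      (lt_add_of_pos_right (Metric.infDist x Ω) hε)
    obtain ⟨ω₂, hω₂, hd₂⟩ := (Metric.infDist_lt_iff hne).1
      (lt_add_of_pos_right (Metric.infDist y Ω) hε)
    have hmem : a • ω₁ + b • ω₂ ∈ Ω := hΩ hω₁ hω₂ ha hb hab
    calc Metric.infDist (a • x + b • y) Ω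
        ≤ dist (a • x + b • y) (a • ω₁ + b • ω₂) :=
          Metric.infDist_le_dist_of_mem hmem
      _ = ‖a • (x - ω₁) + b • (y - ω₂)‖ := by
          rw [dist_eq_norm, smul_sub, smul_sub]; abel_nf
      _ ≤ a * ‖x - ω₁‖ + b * ‖y - ω₂‖ := by
          refine (norm_add_le _ _).trans ?_
          rw [norm_smul, norm_smul, Real.norm_of_nonneg ha, Real.norm_of_nonneg hb]
      _ = a * dist x ω₁ + b * dist y ω₂ := by rw [dist_eq_norm, dist_eq_norm]
      _ ≤ a * (Metric.infDist x Ω + ε) + b * (Metric.infDist y Ω + ε) := by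
          gcongr
      _ = a * Metric.infDist x Ω + b * Metric.infDist y Ω + ε := by
          rw [mul_add, mul_add]; linarith [congrArg (· * ε) hab]
  · intro hf
    intro x hx y hy a b ha hb hab
    have hx0 : Metric.infDist x Ω = 0 := Metric.infDist_zero_of_mem hx
    have hy0 : Metric.infDist y Ω = 0 := Metric.infDist_zero_of_mem hy
    have h := hf.2 (Set.mem_univ x) (Set.mem_univ y) ha hb hab
    simp only [hx0, hy0, mul_zero, add_zero, smul_zero] at h
    have h0 : Metric.infDist (a • x + b • y) Ω = 0 :=
      le_antisymm h (Metric.infDist_nonneg)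
    exact (hcl.mem_iff_infDist_zero hne).2 h0
end

section
/- Let Ω₁, …, Ωₙ be nonempty closed convex sets in a reflexive Banach space X with empty intersection, and set D(x) = max_i d(x, Ωᵢ). If at least one Ωᵢ is bounded, then D attains its infimum over X, i.e., the smallest intersecting ball problem has a solution. -/
open Metric NormedSpace Set

lemma convex_sublevel_infDist {X : Type*} [NormedAddCommGroup X] [NormedSpace ℝ X]
    {S : Set X} (hS : Convex ℝ S) (r : ℝ) :
    Convex ℝ {x : X | Metric.infDist x S ≤ r} := by
  rcases S.eq_empty_or_nonempty with hE | hne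
  · intro a ha b hb t s ht hs hts
    simp only [hE, Metric.infDist_empty, mem_setOf_eq] at ha ⊢
    exact ha
  · intro a ha b hb t s ht hs hts
    simp only [mem_setOf_eq] at ha hb ⊢
    refine le_of_forall_pos_le_add fun ε hε => ?_
    obtain ⟨ya, hya, hda⟩ := (Metric.infDist_lt_iff hne).1
      (ha.trans_lt (lt_add_of_pos_right r hε))
    obtain ⟨yb, hyb, hdb⟩ := (Metric.infDist_lt_iff hne).1
      (hb.trans_lt (lt_add_of_pos_right r hε))
    have hmem : t • ya + s • yb ∈ S := hS hya hyb ht hs hts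
    have hdist : dist (t • a + s • b) (t • ya + s • yb) ≤ t * dist a ya + s * dist b yb := by
      have : t • a + s • b - (t • ya + s • yb) = t • (a - ya) + s • (b - yb) := by
        module
      rw [dist_eq_norm, this]
      calc ‖t • (a - ya) + s • (b - yb)‖ ≤ ‖t • (a - ya)‖ + ‖s • (b - yb)‖ := norm_add_le _ _
        _ = t * ‖a - ya‖ + s * ‖b - yb‖ := by
            rw [norm_smul, norm_smul, Real.norm_of_nonneg ht, Real.norm_of_nonneg hs]
        _ = t * dist a ya + s * dist b yb := by rw [dist_eq_norm, dist_eq_norm]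
    calc Metric.infDist (t • a + s • b) S ≤ dist (t • a + s • b) (t • ya + s • yb) :=
          Metric.infDist_le_dist_of_mem hmem
      _ ≤ t * dist a ya + s * dist b yb := hdist
      _ ≤ t * (r + ε) + s * (r + ε) := by
          have := hda.le
          have := hdb.le
          gcongr
      _ = r + ε := by rw [← add_mul, hts, one_mul]

/-- In a reflexive Banach space (reflexivity expressed as the surjectivity of the
canonical inclusion into the double dual), the smallest intersecting ball problem
generated by finitely many nonempty closed convex sets with empty intersection,
at least one of which is bounded, has a solution. -/
theorem exists_min_of_smallest_intersecting_ball
    {X : Type*} [NormedAddCommGroup X] [NormedSpace ℝ X] [CompleteSpace X]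
    (hrefl : Function.Surjective (NormedSpace.inclusionInDoubleDual ℝ X))
    (n : ℕ) (hn : 1 < n) (Ω : Fin n → Set X)
    (hne : ∀ i, (Ω i).Nonempty) (hcl : ∀ i, IsClosed (Ω i))
    (hco : ∀ i, Convex ℝ (Ω i)) (hint : (⋂ i, Ω i) = ∅)
    (i₀ : Fin n) (hbd : Bornology.IsBounded (Ω i₀)) :
    ∃ xbar : X, IsMinOn
      (fun x => Finset.univ.sup' (Finset.univ_nonempty_iff.2 ⟨⟨0, by omega⟩⟩)
        fun i => Metric.infDist x (Ω i)) Set.univ xbar := by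
  set D : X → ℝ := fun x => Finset.univ.sup' (Finset.univ_nonempty_iff.2 ⟨⟨0, by omega⟩⟩)
        fun i => Metric.infDist x (Ω i) with hD
  have hDle : ∀ (x : X) (r : ℝ), D x ≤ r ↔ ∀ i, Metric.infDist x (Ω i) ≤ r := by
    intro x r
    simp [hD, Finset.sup'_le_iff]
  have hD0 : ∀ x, 0 ≤ D x := by
    intro x
    have h := Finset.le_sup' (f := fun i => Metric.infDist x (Ω i)) (Finset.mem_univ i₀)
    exact le_trans Metric.infDist_nonneg h
  have hbdd : BddBelow (Set.range D) := ⟨0, by rintro _ ⟨x, rfl⟩; exact hD0 x⟩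
  set m : ℝ := ⨅ x, D x with hm
  have hmle : ∀ x, m ≤ D x := fun x => ciInf_le hbdd x
  -- the sublevel sets
  set C : ℕ → Set X := fun k => {x | D x ≤ m + 1 / (k + 1)} with hC
  have hCne : ∀ k, (C k).Nonempty := by
    intro k
    have hpos : (0 : ℝ) < 1 / (k + 1) := by positivity
    have : m < m + 1 / (k + 1) := by linarith
    obtain ⟨x, hx⟩ := exists_lt_of_ciInf_lt this
    exact ⟨x, hx.le⟩
  have hCeq : ∀ k, C k = ⋂ i, {x : X | Metric.infDist x (Ω i) ≤ m + 1 / (k + 1)} := by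
    intro k
    ext x
    simp only [hC, mem_setOf_eq, Set.mem_iInter, hDle]
  have hCcl : ∀ k, IsClosed (C k) := by
    intro k
    rw [hCeq k]
    exact isClosed_iInter fun i =>
      isClosed_le (Metric.continuous_infDist_pt _) continuous_const
  have hCcv : ∀ k, Convex ℝ (C k) := by
    intro k
    rw [hCeq k]
    exact convex_iInter fun i => convex_sublevel_infDist (hco i) _
  have hCmono : ∀ k, C (k + 1) ⊆ C k := by
    intro k x hx
    simp only [hC, mem_setOf_eq] at hx ⊢
    have : (1 : ℝ) / (k + 1 + 1) ≤ 1 / (k + 1) := by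
      apply one_div_le_one_div_of_le <;> push_cast <;> linarith
    push_cast at hx ⊢
    linarith
  -- boundedness of C k
  obtain ⟨R, hR⟩ := hbd.subset_closedBall 0
  have hCbd : ∀ k, ∀ x ∈ C k, ‖x‖ ≤ R + m + 2 := by
    intro k x hx
    simp only [hC, mem_setOf_eq] at hx
    have h1 : (1 : ℝ) / (k + 1) ≤ 1 := by
      apply div_le_one_of_le₀ <;> push_cast <;> linarith
    have h2 : Metric.infDist x (Ω i₀) < m + 2 := by
      have := (hDle x _).1 hx i₀
      linarith
    obtain ⟨y, hy, hdy⟩ := (Metric.infDist_lt_iff (hne i₀)).1 h2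
    have hny : ‖y‖ ≤ R := by simpa using hR hy
    calc ‖x‖ ≤ ‖x - y‖ + ‖y‖ := by
          have h := norm_add_le (x - y) y
          simpa using h
      _ ≤ (m + 2) + R := by
          rw [← dist_eq_norm] at *
          exact add_le_add hdy.le hny
      _ = R + m + 2 := by ring
  -- push into the double dual with weak-* topology
  set J : X → WeakDual ℝ (StrongDual ℝ X) :=
    fun x => StrongDual.toWeakDual (NormedSpace.inclusionInDoubleDual ℝ X x) with hJ
  set T : ℕ → Set (WeakDual ℝ (StrongDual ℝ X)) :=
    fun k => closure (J '' C k) with hT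
  set K : Set (WeakDual ℝ (StrongDual ℝ X)) :=
    WeakDual.toStrongDual ⁻¹'
      Metric.closedBall (0 : StrongDual ℝ (StrongDual ℝ X)) (R + m + 2) with hK
  have hKcl : IsClosed K := WeakDual.isClosed_closedBall 0 (R + m + 2)
  have hKcp : IsCompact K := WeakDual.isCompact_closedBall 0 (R + m + 2)
  have hTK : ∀ k, T k ⊆ K := by
    intro k
    apply closure_minimal _ hKcl
    rintro _ ⟨x, hx, rfl⟩
    simp only [hK, Set.mem_preimage, Metric.mem_closedBall, dist_zero_right]
    refine (dist_zero_right (WeakDual.toStrongDual (J x))).trans_le ?_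
    calc ‖WeakDual.toStrongDual (J x)‖ = ‖NormedSpace.inclusionInDoubleDual ℝ X x‖ := rfl
      _ ≤ ‖x‖ := NormedSpace.double_dual_bound ℝ X x
      _ ≤ R + m + 2 := hCbd k x hx
  have hTne : ∀ k, (T k).Nonempty := fun k =>
    ((hCne k).image J).closure
  have hTcl : ∀ k, IsClosed (T k) := fun k => isClosed_closure
  have hTmono : ∀ k, T (k + 1) ⊆ T k := fun k =>
    closure_mono (Set.image_mono (hCmono k))
  have hT0 : IsCompact (T 0) := hKcp.of_isClosed_subset (hTcl 0) (hTK 0)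
  obtain ⟨φ, hφ⟩ := IsCompact.nonempty_iInter_of_sequence_nonempty_isCompact_isClosed
    T hTmono hTne hT0 hTcl
  obtain ⟨xbar, hxbar⟩ := hrefl (WeakDual.toStrongDual φ)
  have hJx : J xbar = φ := by
    simp only [hJ, hxbar]
    rfl
  -- xbar belongs to every C k
  have hxC : ∀ k, xbar ∈ C k := by
    intro k
    by_contra hmem
    obtain ⟨f, u, hfu, huf⟩ := geometric_hahn_banach_closed_point (hCcv k) (hCcl k) hmem
    have hcont : Continuous fun ψ : WeakDual ℝ (StrongDual ℝ X) => ψ f :=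
      WeakDual.eval_continuous f
    have hsub : J '' C k ⊆ (fun ψ : WeakDual ℝ (StrongDual ℝ X) => ψ f) ⁻¹' Set.Iic u := by
      rintro _ ⟨x, hx, rfl⟩
      simp only [Set.mem_preimage, Set.mem_Iic]
      exact (hfu x hx).le
    have hclos : T k ⊆ (fun ψ : WeakDual ℝ (StrongDual ℝ X) => ψ f) ⁻¹' Set.Iic u :=
      closure_minimal hsub (IsClosed.preimage hcont isClosed_Iic)
    have hφm : φ ∈ T k := by
      have := hφ
      rw [Set.mem_iInter] at this
      exact this k
    have h1 : φ f ≤ u := hclos hφm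
    have h2 : φ f = f xbar := by rw [← hJx]; rfl
    rw [h2] at h1
    linarith
  -- conclude
  have hfinal : D xbar ≤ m := by
    refine le_of_forall_pos_le_add fun ε hε => ?_
    obtain ⟨k, hk⟩ := exists_nat_one_div_lt hε
    have := hxC k
    simp only [hC, mem_setOf_eq] at this
    push_cast at this hk
    linarith
  exact ⟨xbar, isMinOn_iff.2 fun x _ => le_trans hfinal (hmle x)⟩
end

section
/- In ℝ² with the Euclidean norm, let Ω₁ = {0} × ℝ and Ω₂ = {(x, y) : x > 0, y ≥ 1/x}. Then the function D(p) = max{d(p, Ω₁), d(p, Ω₂)} has infimum 0 over ℝ² but D(p) > 0 for every p ∈ ℝ², so the smallest intersecting ball problem generated by Ω₁ and Ω₂ has no solution. -/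
noncomputable def vpt (a b : ℝ) : EuclideanSpace ℝ (Fin 2) :=
  (WithLp.equiv 2 (Fin 2 → ℝ)).symm ![a, b]

@[simp] lemma vpt_zero (a b : ℝ) : vpt a b 0 = a := rfl
@[simp] lemma vpt_one (a b : ℝ) : vpt a b 1 = b := rfl

lemma dist_vpt (a b c d : ℝ) :
    dist (vpt a b) (vpt c d) = Real.sqrt ((a - c)^2 + (b - d)^2) := by
  rw [EuclideanSpace.dist_eq, Fin.sum_univ_two]
  simp [Real.dist_eq, sq_abs]

/-- In the Euclidean plane, with Ω₁ the vertical axis and Ω₂ the region above the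
hyperbola y = 1/x (x > 0), the function D(p) = max{d(p,Ω₁), d(p,Ω₂)} has infimum 0
but is everywhere positive, so the smallest intersecting ball problem has no solution. -/
theorem no_solution_example :
    let Ω₁ : Set (EuclideanSpace ℝ (Fin 2)) := {p | p 0 = 0}
    let Ω₂ : Set (EuclideanSpace ℝ (Fin 2)) := {p | 0 < p 0 ∧ 1 / p 0 ≤ p 1}
    let D : EuclideanSpace ℝ (Fin 2) → ℝ :=
      fun p => max (Metric.infDist p Ω₁) (Metric.infDist p Ω₂)
    (⨅ p : EuclideanSpace ℝ (Fin 2), D p) = 0 ∧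
      ∀ p : EuclideanSpace ℝ (Fin 2), 0 < D p := by
  intro Ω₁ Ω₂ D
  have hΩ₂ne : Ω₂.Nonempty := ⟨vpt 1 1, by simp [Ω₂]⟩
  have hDnn : ∀ p, 0 ≤ D p := fun p =>
    le_trans Metric.infDist_nonneg (le_max_left _ _)
  have hbdd : BddBelow (Set.range D) := ⟨0, by rintro x ⟨p, rfl⟩; exact hDnn p⟩
  constructor
  · refine le_antisymm ?_ (le_ciInf hDnn)
    refine le_of_forall_pos_le_add fun ε hε => ?_
    have ht : (0:ℝ) < 1/ε := by positivity
    have hmem : vpt ε (1/ε) ∈ Ω₂ := by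
      constructor
      · simpa using hε
      · simp
    have h1 : Metric.infDist (vpt 0 (1/ε)) Ω₁ = 0 := by
      have : vpt 0 (1/ε) ∈ Ω₁ := by simp [Ω₁]
      exact Metric.infDist_zero_of_mem this
    have h2 : Metric.infDist (vpt 0 (1/ε)) Ω₂ ≤ ε := by
      refine le_trans (Metric.infDist_le_dist_of_mem hmem) ?_
      rw [dist_vpt]
      simp [sub_self]
      rw [Real.sqrt_sq_eq_abs, abs_of_pos hε]
    calc (⨅ p, D p) ≤ D (vpt 0 (1/ε)) := ciInf_le hbdd _
      _ ≤ ε := by rw [show D (vpt 0 (1/ε)) = max _ _ from rfl, h1]; exact max_le hε.le h2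
      _ = 0 + ε := by ring
  · intro p
    by_contra h
    push_neg at h
    have hD0 : D p = 0 := le_antisymm h (hDnn p)
    have h1 : Metric.infDist p Ω₁ = 0 :=
      le_antisymm (le_trans (le_max_left _ _) hD0.le) Metric.infDist_nonneg
    have h2 : Metric.infDist p Ω₂ = 0 :=
      le_antisymm (le_trans (le_max_right _ _) hD0.le) Metric.infDist_nonneg
    -- p ∈ Ω₁ since Ω₁ is closed
    have hΩ₁closed : IsClosed Ω₁ := by
      have : Continuous fun q : EuclideanSpace ℝ (Fin 2) => q 0 :=
        (continuous_apply 0).comp (PiLp.continuous_ofLp 2 fun _ : Fin 2 => ℝ)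
      exact isClosed_eq this continuous_const
    have hpΩ₁ : p ∈ Ω₁ := by
      rw [← hΩ₁closed.closure_eq]
      exact Metric.mem_closure_iff_infDist_zero ⟨vpt 0 0, by simp [Ω₁]⟩ |>.mpr h1
    -- p ∈ closure Ω₂ ⊆ {q | 0 ≤ q 0 ∧ 1 ≤ q 0 * q 1}
    have hpcl : p ∈ closure Ω₂ :=
      (Metric.mem_closure_iff_infDist_zero hΩ₂ne).mpr h2
    have hcont0 : Continuous fun q : EuclideanSpace ℝ (Fin 2) => q 0 :=
      (continuous_apply 0).comp (PiLp.continuous_ofLp 2 fun _ : Fin 2 => ℝ)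
    have hcont1 : Continuous fun q : EuclideanSpace ℝ (Fin 2) => q 1 :=
      (continuous_apply 1).comp (PiLp.continuous_ofLp 2 fun _ : Fin 2 => ℝ)
    have hCclosed : IsClosed {q : EuclideanSpace ℝ (Fin 2) | 0 ≤ q 0 ∧ 1 ≤ q 0 * q 1} :=
      IsClosed.inter (isClosed_le continuous_const hcont0)
        (isClosed_le continuous_const (hcont0.mul hcont1))
    have hsub : Ω₂ ⊆ {q : EuclideanSpace ℝ (Fin 2) | 0 ≤ q 0 ∧ 1 ≤ q 0 * q 1} := by
      rintro q ⟨hq0, hq1⟩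
      refine ⟨hq0.le, ?_⟩
      have := mul_le_mul_of_nonneg_left hq1 hq0.le
      rwa [mul_one_div, div_self hq0.ne'] at this
    have hpC := (hCclosed.closure_subset_iff.mpr hsub) hpcl
    have : (1:ℝ) ≤ 0 := by
      have := hpC.2
      rw [hpΩ₁] at this
      simpa using this
    linarith
end

section
/- Let Ωᵢ = B̄(ωᵢ; r) (i = 1, …, n) be closed balls of common radius r ≥ 0 in a Hilbert space X with ⋂ᵢ Ωᵢ = ∅. Then for all x ∈ X, max{d(x, Ωᵢ) : i = 1, …, n} = max{‖x − ωᵢ‖ : i = 1, …, n} − r. -/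
open Metric

lemma infDist_closedBall_eq {X : Type*} [NormedAddCommGroup X] [NormedSpace ℝ X]
    (x ω : X) (r : ℝ) (hr : 0 ≤ r) :
    infDist x (closedBall ω r) = max (‖x - ω‖ - r) 0 := by
  rcases le_or_gt ‖x - ω‖ r with h | h
  · have hx : x ∈ closedBall ω r := by
      simpa [mem_closedBall, dist_eq_norm] using h
    rw [infDist_zero_of_mem hx, max_eq_right (by linarith)]
  · have hpos : 0 < ‖x - ω‖ := lt_of_le_of_lt hr h
    rw [max_eq_left (by linarith)]
    apply le_antisymm
    · set y := ω + (r / ‖x - ω‖) • (x - ω) with hy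
      have hymem : y ∈ closedBall ω r := by
        simp only [mem_closedBall, dist_eq_norm, hy, add_sub_cancel_left,
          norm_smul, Real.norm_eq_abs]
        rw [abs_of_nonneg (div_nonneg hr hpos.le), div_mul_cancel₀ _ hpos.ne']
      have hdist : dist x y = ‖x - ω‖ - r := by
        have : x - y = (1 - r / ‖x - ω‖) • (x - ω) := by
          rw [hy]; module
        rw [dist_eq_norm, this, norm_smul, Real.norm_eq_abs,
          abs_of_nonneg (by rw [sub_nonneg]; exact div_le_one_of_le₀ h.le (norm_nonneg _)),
          sub_mul, one_mul, div_mul_cancel₀ _ hpos.ne']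
      calc infDist x (closedBall ω r) ≤ dist x y := infDist_le_dist_of_mem hymem
        _ = ‖x - ω‖ - r := hdist
    · by_contra hlt
      push_neg at hlt
      obtain ⟨y, hy, hdy⟩ := (infDist_lt_iff ⟨ω, mem_closedBall_self hr⟩).1 hlt
      have h1 : dist ω y ≤ r := by rw [dist_comm]; exact hy
      have h2 : ‖x - ω‖ ≤ dist x y + dist y ω := by
        rw [← dist_eq_norm]; exact dist_triangle _ _ _
      rw [dist_comm y ω] at h2
      linarith

/-- For closed balls of common radius r with empty intersection in a Hilbert space,
the max of the distances to the balls equals the max of distances to the centers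
minus r. -/
theorem max_infDist_closedBall_eq
    {X : Type*} [NormedAddCommGroup X] [InnerProductSpace ℝ X]
    (n : ℕ) (hn : 0 < n) (ω : Fin n → X) (r : ℝ) (hr : 0 ≤ r)
    (hint : (⋂ i, Metric.closedBall (ω i) r) = ∅) (x : X) :
    (Finset.univ.sup' (Finset.univ_nonempty_iff.2 ⟨⟨0, hn⟩⟩)
        fun i => Metric.infDist x (Metric.closedBall (ω i) r)) =
      (Finset.univ.sup' (Finset.univ_nonempty_iff.2 ⟨⟨0, hn⟩⟩)
        fun i => ‖x - ω i‖) - r := by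
  have hne : (Finset.univ : Finset (Fin n)).Nonempty := Finset.univ_nonempty_iff.2 ⟨⟨0, hn⟩⟩
  -- from empty intersection: some i with ‖x - ω i‖ > r
  have hx : x ∉ ⋂ i, Metric.closedBall (ω i) r := by simp [hint]
  rw [Set.mem_iInter] at hx
  push_neg at hx
  obtain ⟨i₀, hi₀⟩ := hx
  have hi₀' : r < ‖x - ω i₀‖ := by
    rw [Metric.mem_closedBall, not_le, dist_eq_norm] at hi₀; exact hi₀
  have hsup : r < Finset.univ.sup' hne fun i => ‖x - ω i‖ :=
    lt_of_lt_of_le hi₀' (Finset.le_sup' (fun i => ‖x - ω i‖) (Finset.mem_univ i₀))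
  have key : ∀ i, infDist x (Metric.closedBall (ω i) r) = max (‖x - ω i‖ - r) 0 :=
    fun i => infDist_closedBall_eq x (ω i) r hr
  simp only [key]
  rw [eq_comm]
  apply le_antisymm
  · rw [sub_le_iff_le_add, Finset.sup'_le_iff]
    intro i _
    calc ‖x - ω i‖ ≤ max (‖x - ω i‖ - r) 0 + r := by
          rcases le_total (‖x - ω i‖ - r) 0 with h | h
          · rw [max_eq_right h]; linarith
          · rw [max_eq_left h]; ring_nf; rfl
      _ ≤ _ + r := by
          gcongr
          exact Finset.le_sup' (fun i => max (‖x - ω i‖ - r) 0) (Finset.mem_univ i)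
  · rw [Finset.sup'_le_iff]
    intro i _
    rcases le_total (‖x - ω i‖ - r) 0 with h | h
    · rw [max_eq_right h]; linarith
    · rw [max_eq_left h, sub_le_sub_iff_right]
      exact Finset.le_sup' (fun i => ‖x - ω i‖) (Finset.mem_univ i)
end

section
/- Let a₁, a₂, a₃ be three points in ℝ² with the Euclidean norm, not all equal, such that ⟨a₂ − a₁, a₃ − a₁⟩ ≤ 0 (the angle at a₁ is non-acute). Then the midpoint (a₂ + a₃)/2 is the unique minimizer of f(x) = max{‖x − a₁‖, ‖x − a₂‖, ‖x − a₃‖}. -/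
set_option maxHeartbeats 1000000 in
/-- For three points in the Euclidean plane, not all equal, with a non-acute angle
at `a₁`, the midpoint of `a₂` and `a₃` is the unique minimizer of
`f(x) = max{‖x - a₁‖, ‖x - a₂‖, ‖x - a₃‖}`. -/
theorem midpoint_unique_min_of_obtuse
    (a₁ a₂ a₃ : EuclideanSpace ℝ (Fin 2))
    (hne : ¬(a₁ = a₂ ∧ a₂ = a₃))
    (hangle : inner ℝ (a₂ - a₁) (a₃ - a₁) ≤ (0 : ℝ)) :
    IsMinOn (fun x => max (max ‖x - a₁‖ ‖x - a₂‖) ‖x - a₃‖) Set.univ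
        ((2 : ℝ)⁻¹ • (a₂ + a₃)) ∧
      ∀ x : EuclideanSpace ℝ (Fin 2),
        IsMinOn (fun x => max (max ‖x - a₁‖ ‖x - a₂‖) ‖x - a₃‖) Set.univ x →
          x = (2 : ℝ)⁻¹ • (a₂ + a₃) := by
  set m : EuclideanSpace ℝ (Fin 2) := (2 : ℝ)⁻¹ • (a₂ + a₃) with hm
  set r : ℝ := ‖a₂ - a₃‖ / 2 with hr
  have hma₂ : m - a₂ = (2:ℝ)⁻¹ • (a₃ - a₂) := by rw [hm]; module
  have hma₃ : m - a₃ = (2:ℝ)⁻¹ • (a₂ - a₃) := by rw [hm]; module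
  have hma₁ : m - a₁ = (2:ℝ)⁻¹ • ((a₂ - a₁) + (a₃ - a₁)) := by rw [hm]; module
  have hn2 : ‖m - a₂‖ = r := by
    rw [hma₂, norm_smul, norm_sub_rev a₃ a₂, hr]
    simp
    ring
  have hn3 : ‖m - a₃‖ = r := by
    rw [hma₃, norm_smul, hr]; simp; ring
  have hn1 : ‖m - a₁‖ ≤ r := by
    have h1 : ‖(a₂ - a₁) + (a₃ - a₁)‖^2 ≤ ‖a₂ - a₃‖^2 := by
      have e1 := norm_add_sq_real (a₂ - a₁) (a₃ - a₁)
      have e2 := norm_sub_sq_real (a₂ - a₁) (a₃ - a₁)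
      have e3 : (a₂ - a₁) - (a₃ - a₁) = a₂ - a₃ := by module
      rw [e3] at e2
      nlinarith
    have h2 : ‖(a₂ - a₁) + (a₃ - a₁)‖ ≤ ‖a₂ - a₃‖ := by
      nlinarith [norm_nonneg ((a₂ - a₁) + (a₃ - a₁)), norm_nonneg (a₂ - a₃)]
    rw [hma₁, norm_smul, hr]
    simp
    linarith
  have hfm : max (max ‖m - a₁‖ ‖m - a₂‖) ‖m - a₃‖ = r := by
    rw [hn2, hn3, max_eq_right hn1, max_self]
  have hlb : ∀ x : EuclideanSpace ℝ (Fin 2),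
      r ≤ max (max ‖x - a₁‖ ‖x - a₂‖) ‖x - a₃‖ := by
    intro x
    have ht : ‖a₂ - a₃‖ ≤ ‖x - a₂‖ + ‖x - a₃‖ := by
      have := norm_sub_le_norm_sub_add_norm_sub a₂ x a₃
      calc ‖a₂ - a₃‖ ≤ ‖a₂ - x‖ + ‖x - a₃‖ := norm_sub_le_norm_sub_add_norm_sub _ _ _
        _ = ‖x - a₂‖ + ‖x - a₃‖ := by rw [norm_sub_rev]
    have h2 : ‖x - a₂‖ ≤ max (max ‖x - a₁‖ ‖x - a₂‖) ‖x - a₃‖ :=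
      le_trans (le_max_right _ _) (le_max_left _ _)
    have h3 : ‖x - a₃‖ ≤ max (max ‖x - a₁‖ ‖x - a₂‖) ‖x - a₃‖ := le_max_right _ _
    rw [hr]; linarith
  have hmin : IsMinOn (fun x => max (max ‖x - a₁‖ ‖x - a₂‖) ‖x - a₃‖) Set.univ m := by
    intro x _
    simp only [Set.mem_setOf_eq, hfm]
    exact hlb x
  refine ⟨hmin, ?_⟩
  intro x hx
  have hxm : max (max ‖x - a₁‖ ‖x - a₂‖) ‖x - a₃‖ ≤ r := by
    have h := hx (Set.mem_univ m)
    simpa only [Set.mem_setOf_eq, hfm] using h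
  have hu : ‖x - a₂‖ ≤ r :=
    le_trans (le_trans (le_max_right _ _) (le_max_left _ _)) hxm
  have hv : ‖x - a₃‖ ≤ r := le_trans (le_max_right _ _) hxm
  have hxmeq : x - m = (2:ℝ)⁻¹ • ((x - a₂) + (x - a₃)) := by rw [hm]; module
  have hz : ‖(x - a₂) + (x - a₃)‖^2 ≤ 0 := by
    have e1 := norm_add_sq_real (x - a₂) (x - a₃)
    have e2 := norm_sub_sq_real (x - a₂) (x - a₃)
    have e3 : (x - a₂) - (x - a₃) = a₃ - a₂ := by module
    rw [e3, norm_sub_rev a₃ a₂] at e2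
    have hrr : ‖a₂ - a₃‖ = 2 * r := by rw [hr]; ring
    rw [hrr] at e2
    nlinarith [norm_nonneg (x - a₂), norm_nonneg (x - a₃), sq_nonneg (‖a₂ - a₃‖)]
  have hz0 : (x - a₂) + (x - a₃) = 0 := by
    have := norm_nonneg ((x - a₂) + (x - a₃))
    have : ‖(x - a₂) + (x - a₃)‖ = 0 := by nlinarith
    exact norm_eq_zero.mp this
  have : x - m = 0 := by rw [hxmeq, hz0, smul_zero]
  exact sub_eq_zero.mp this
end
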